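/- Let N ≥ 2 and let t > 0 be a real number. Let A(t) be the (N−1)×(N−1) real matrix with entries A(t)_{ij} = 2·cosh(t) if i = j, A(t)_{ij} = −1 if |i − j| = 1, and A(t)_{ij} = 0 otherwise (indices 1 ≤ i, j ≤ N−1). Then A(t) is invertible and its inverse has entries (A(t)^{−1})_{ij} = sinh((N − max(i, j))·t)·sinh(min(i, j)·t) / (sinh(N·t)·sinh(t)). -/
import Mathlib


open Matrix Real BigOperators

noncomputable def gg (N : ℕ) (t : ℝ) (m n : ℕ) : ℝ :=
  Real.sinh (((N : ℝ) - ((max m n : ℕ) : ℝ)) * t) * Real.sinh (((min m n : ℕ) : ℝ) * t)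

lemma hyp1 (x y : ℝ) : 2 * Real.cosh x * Real.sinh y = Real.sinh (y + x) + Real.sinh (y - x) := by
  rw [Real.sinh_add, Real.sinh_sub]; ring

lemma hyp2 (a b x : ℝ) :
    Real.sinh a * Real.sinh (b + x) - Real.sinh (a - x) * Real.sinh b
      = Real.sinh (a + b) * Real.sinh x := by
  rw [Real.sinh_add, Real.sinh_sub, Real.sinh_add]; ring

lemma gg_zero_left (N : ℕ) (t : ℝ) (n : ℕ) : gg N t 0 n = 0 := by
  simp [gg]

lemma gg_zero_right (N : ℕ) (t : ℝ) (n : ℕ) (hn : n ≤ N) : gg N t N n = 0 := by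
  simp [gg, max_eq_left hn]

lemma gg_key (N : ℕ) (t : ℝ) (m n : ℕ) (hm1 : 1 ≤ m) (hm2 : m ≤ N - 1)
    (hn1 : 1 ≤ n) (hn2 : n ≤ N - 1) (hN : 2 ≤ N) :
    2 * Real.cosh t * gg N t m n - gg N t (m - 1) n - gg N t (m + 1) n
      = if m = n then Real.sinh ((N : ℝ) * t) * Real.sinh t else 0 := by
  rcases lt_trichotomy m n with h | h | h
  · rw [if_neg (by omega)]
    unfold gg
    rw [show max m n = n from by omega, show min m n = m from by omega,
      show max (m - 1) n = n from by omega, show min (m - 1) n = m - 1 from by omega,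
      show max (m + 1) n = n from by omega, show min (m + 1) n = m + 1 from by omega]
    rw [show ((m - 1 : ℕ) : ℝ) = (m : ℝ) - 1 from by
      rw [Nat.cast_sub hm1]; norm_num]
    rw [show ((m : ℝ) - 1) * t = (m : ℝ) * t - t from by ring]
    push_cast
    rw [show ((m : ℝ) + 1) * t = (m : ℝ) * t + t from by ring]
    linear_combination Real.sinh (((N : ℝ) - (n : ℝ)) * t) * hyp1 t ((m : ℝ) * t)
  · subst h
    rw [if_pos rfl]
    unfold gg
    rw [show max m m = m from by omega, show min m m = m from by omega,
      show max (m - 1) m = m from by omega, show min (m - 1) m = m - 1 from by omega,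
      show max (m + 1) m = m + 1 from by omega, show min (m + 1) m = m from by omega]
    rw [show ((m - 1 : ℕ) : ℝ) = (m : ℝ) - 1 from by
      rw [Nat.cast_sub hm1]; norm_num]
    rw [show ((m : ℝ) - 1) * t = (m : ℝ) * t - t from by ring]
    push_cast
    rw [show ((N : ℝ) - ((m : ℝ) + 1)) * t = ((N : ℝ) - (m : ℝ)) * t - t from by ring]
    rw [show ((N : ℝ)) * t = (((N : ℝ) - (m : ℝ)) * t) + ((m : ℝ) * t) from by ring]
    linear_combination Real.sinh (((N : ℝ) - (m : ℝ)) * t) * hyp1 t ((m : ℝ) * t)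
      + hyp2 (((N : ℝ) - (m : ℝ)) * t) ((m : ℝ) * t) t
  · rw [if_neg (by omega)]
    unfold gg
    rw [show max m n = m from by omega, show min m n = n from by omega,
      show max (m - 1) n = m - 1 from by omega, show min (m - 1) n = n from by omega,
      show max (m + 1) n = m + 1 from by omega, show min (m + 1) n = n from by omega]
    rw [show ((m - 1 : ℕ) : ℝ) = (m : ℝ) - 1 from by
      rw [Nat.cast_sub hm1]; norm_num]
    push_cast
    rw [show ((N : ℝ) - ((m : ℝ) - 1)) * t = ((N : ℝ) - (m : ℝ)) * t + t from by ring]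
    rw [show ((N : ℝ) - ((m : ℝ) + 1)) * t = ((N : ℝ) - (m : ℝ)) * t - t from by ring]
    linear_combination Real.sinh ((n : ℝ) * t) * hyp1 t (((N : ℝ) - (m : ℝ)) * t)

theorem stmt_12 (N : ℕ) (hN : 2 ≤ N) (t : ℝ) (ht : 0 < t)
    (A B : Matrix (Fin (N - 1)) (Fin (N - 1)) ℝ)
    (hA : ∀ i k, A i k =
      if i = k then 2 * Real.cosh t
      else if ((i : ℕ) + 1 = (k : ℕ) ∨ (k : ℕ) + 1 = (i : ℕ)) then -1 else 0)
    (hB : ∀ i k, B i k =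
      Real.sinh (((N : ℝ) - ((max ((i : ℕ) + 1) ((k : ℕ) + 1) : ℕ) : ℝ)) * t) *
        Real.sinh (((min ((i : ℕ) + 1) ((k : ℕ) + 1) : ℕ) : ℝ) * t) /
        (Real.sinh ((N : ℝ) * t) * Real.sinh t)) :
    A * B = 1 ∧ B * A = 1 := by
  have hD : Real.sinh ((N : ℝ) * t) * Real.sinh t ≠ 0 := by
    have h1 : (0 : ℝ) < Real.sinh t := Real.sinh_pos_iff.mpr ht
    have h2 : (0 : ℝ) < Real.sinh ((N : ℝ) * t) := by
      apply Real.sinh_pos_iff.mpr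
      have hNp : (0 : ℝ) < (N : ℝ) := by exact_mod_cast (by omega : 0 < N)
      exact mul_pos hNp ht
    exact ne_of_gt (mul_pos h2 h1)
  have hBg : ∀ p q : Fin (N - 1), B p q =
      gg N t ((p : ℕ) + 1) ((q : ℕ) + 1) / (Real.sinh ((N : ℝ) * t) * Real.sinh t) := by
    intro p q; rw [hB]; rfl
  have key : A * B = 1 := by
    ext i k
    rw [Matrix.mul_apply, Matrix.one_apply]
    have hsplit : ∀ j : Fin (N - 1), A i j * B j k =
        (if i = j then 2 * Real.cosh t * B j k else 0)
        + (if (i : ℕ) + 1 = (j : ℕ) then -B j k else 0)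
        + (if (j : ℕ) + 1 = (i : ℕ) then -B j k else 0) := by
      intro j
      rw [hA]
      by_cases h1 : i = j
      · subst h1
        simp
      · have hne : (i : ℕ) ≠ (j : ℕ) := fun hh => h1 (Fin.ext hh)
        rw [if_neg h1, if_neg h1]
        by_cases h2 : (i : ℕ) + 1 = (j : ℕ)
        · rw [if_pos (Or.inl h2), if_pos h2, if_neg (by omega)]; ring
        · by_cases h3 : (j : ℕ) + 1 = (i : ℕ)
          · rw [if_pos (Or.inr h3), if_neg h2, if_pos h3]; ring
          · rw [if_neg (by tauto), if_neg h2, if_neg h3]; ring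
    rw [Finset.sum_congr rfl (fun j _ => hsplit j), Finset.sum_add_distrib,
      Finset.sum_add_distrib]
    have S1 : ∑ j : Fin (N - 1), (if i = j then 2 * Real.cosh t * B j k else 0)
        = 2 * Real.cosh t * B i k := by
      simp
    have S2 : ∑ j : Fin (N - 1), (if (i : ℕ) + 1 = (j : ℕ) then -B j k else 0)
        = -(gg N t ((i : ℕ) + 1 + 1) ((k : ℕ) + 1)
            / (Real.sinh ((N : ℝ) * t) * Real.sinh t)) := by
      by_cases h : (i : ℕ) + 1 < N - 1
      · rw [Finset.sum_eq_single (⟨(i : ℕ) + 1, h⟩ : Fin (N - 1))]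
        · rw [if_pos rfl, hBg]
        · intro j _ hj
          exact if_neg (fun hc => hj (Fin.ext hc.symm))
        · intro h'; exact absurd (Finset.mem_univ _) h'
      · rw [Finset.sum_eq_zero (fun j _ => if_neg (by have hjl := j.isLt; omega))]
        rw [show (i : ℕ) + 1 + 1 = N from by omega]
        rw [gg_zero_right N t _ (by omega : (k : ℕ) + 1 ≤ N)]
        simp
    have S3 : ∑ j : Fin (N - 1), (if (j : ℕ) + 1 = (i : ℕ) then -B j k else 0)
        = -(gg N t (i : ℕ) ((k : ℕ) + 1)
            / (Real.sinh ((N : ℝ) * t) * Real.sinh t)) := by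
      by_cases h : 0 < (i : ℕ)
      · have hlt : (i : ℕ) - 1 < N - 1 := by omega
        rw [Finset.sum_eq_single (⟨(i : ℕ) - 1, hlt⟩ : Fin (N - 1))]
        · rw [if_pos (by simp; omega), hBg]
          norm_num
          rw [show (i : ℕ) - 1 + 1 = (i : ℕ) from by omega]
        · intro j _ hj
          exact if_neg (fun hc => hj (by apply Fin.ext; simp only [Fin.val_mk]; omega))
        · intro h'; exact absurd (Finset.mem_univ _) h'
      · rw [Finset.sum_eq_zero (fun j _ => if_neg (by omega))]
        rw [show (i : ℕ) = 0 from by omega, gg_zero_left]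
        simp
    rw [S1, S2, S3, hBg]
    have hkey := gg_key N t ((i : ℕ) + 1) ((k : ℕ) + 1) (by omega)
      (by have := i.isLt; omega) (by omega) (by have := k.isLt; omega) hN
    rw [show (i : ℕ) + 1 - 1 = (i : ℕ) from by omega] at hkey
    have hik : (i = k) ↔ ((i : ℕ) + 1 = (k : ℕ) + 1) := by
      rw [Fin.ext_iff]; omega
    by_cases hc : i = k
    · rw [if_pos hc, if_pos (hik.mp hc)] at *
      field_simp
      linear_combination hkey
    · rw [if_neg hc, if_neg (fun hh => hc (hik.mpr hh))] at *
      field_simp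
      linear_combination hkey
  exact ⟨key, mul_eq_one_comm.mp key⟩
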